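/- For all m ∈ ℤ and all n, n' ∈ ℕ one has 0 ≤ v^{m,0}_{n,n'} + v^{m,1}_{n,n'} ≤ v^{0,0}_{n,n'} + v^{0,1}_{n,n'}. -/

import Mathlib

open Real

/-- Pochhammer symbol `(x)_a = Γ(x+a)/Γ(x)` for real arguments. -/
noncomputable def poch (x a : ℝ) : ℝ := Real.Gamma (x + a) / Real.Gamma x

/-- Coulomb matrix elements `v^{m,0}_{n,n'}`. -/
noncomputable def v0 (m : ℤ) (n n' : ℕ) : ℝ :=
  (1 / (Real.pi * Real.sqrt (poch ((n : ℝ) + 1) ((|m| : ℤ) : ℝ) *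
      poch ((n' : ℝ) + 1) ((|m| : ℤ) : ℝ)))) *
    ∑ k ∈ Finset.range (min n n' + 1),
      poch ((k : ℝ) + 1) (((|m| : ℤ) : ℝ) - 1/2) /
        (poch ((n : ℝ) - (k : ℝ) + 1/2) (1/2) * poch ((n' : ℝ) - (k : ℝ) + 1/2) (1/2))

/-- Coulomb matrix elements `v^{m,1}_{n,n'}`. -/
noncomputable def v1 (m : ℤ) (n n' : ℕ) : ℝ :=
  if 0 ≤ m then v0 (m + 1) n n' else v0 (m + 1) (n + 1) (n' + 1)

/-- The quadratic form `E_m[a]` at coupling `Z`. -/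
noncomputable def Eform (Z : ℝ) (m : ℤ) (a : ℕ → ℝ) : ℝ :=
  (∑' n : ℕ, 2 * Real.sqrt ((n : ℝ) + ((max m 0 : ℤ) : ℝ) + 1) * a n ^ 2)
    - (Z / 2) * ∑' n : ℕ, ∑' n' : ℕ, a n * (v0 m n n' + v1 m n n') * a n'

/-- The critical coupling constant `Z_c`. -/
noncomputable def Zc : ℝ :=
  (Real.Gamma (1/4) ^ 4 / (8 * Real.pi ^ 2) + 8 * Real.pi ^ 2 / Real.Gamma (1/4) ^ 4)⁻¹



open Finset

noncomputable def cc (j : ℕ) : ℝ := Real.Gamma ((j:ℝ) + 1/2) / Real.Gamma ((j:ℝ) + 1)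

lemma cc_pos (j : ℕ) : 0 < cc j := by
  apply div_pos <;> apply Real.Gamma_pos_of_pos <;> positivity

lemma cc_succ (j : ℕ) : cc (j+1) = cc j * (((j:ℝ) + 1/2) / ((j:ℝ) + 1)) := by
  have g1 := Real.Gamma_add_one (s := (j:ℝ) + 1/2) (by positivity)
  have g2 := Real.Gamma_add_one (s := (j:ℝ) + 1) (by positivity)
  have G1 : 0 < Real.Gamma ((j:ℝ) + 1/2) := Real.Gamma_pos_of_pos (by positivity)
  have G2 : 0 < Real.Gamma ((j:ℝ) + 1) := Real.Gamma_pos_of_pos (by positivity)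
  simp only [cc]
  push_cast
  rw [show (j:ℝ) + 1 + 1/2 = ((j:ℝ) + 1/2) + 1 by ring, g1, g2]
  field_simp

lemma cc_succ_le (j : ℕ) : cc (j+1) ≤ cc j := by
  rw [cc_succ]
  have h1 : ((j:ℝ) + 1/2) / ((j:ℝ) + 1) ≤ 1 := by
    rw [div_le_one (by positivity)]; linarith
  nlinarith [cc_pos j]

lemma cc_anti : Antitone cc := antitone_nat_of_succ_le cc_succ_le

lemma cc_zero : cc 0 = Real.sqrt π := by
  rw [cc]
  norm_num [Real.Gamma_one, show ((0:ℕ):ℝ) + 1/2 = 1/2 by norm_num, Real.Gamma_one_half_eq]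

noncomputable def W (n : ℕ) : ℝ := ∑ i ∈ Finset.range (n+1), cc i * cc (n-i) / ((i:ℝ)+1)

lemma key_rec (n : ℕ) : ((n:ℝ)+2) * W (n+1) = ((n:ℝ)+1) * W n + Real.sqrt π * cc (n+1) := by
  have L : ((n:ℝ)+2) * W (n+1)
      = (∑ k ∈ Finset.range (n+2), cc k * cc (n+1-k))
        + ∑ k ∈ Finset.range (n+2), cc k * cc (n+1-k) * ((n+1-k : ℕ):ℝ) / ((k:ℝ)+1) := by
    rw [W, Finset.mul_sum, ← Finset.sum_add_distrib]
    apply Finset.sum_congr rfl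
    intro k hk
    have hk' : k ≤ n + 1 := by simpa [Nat.lt_succ_iff] using hk
    have hc : ((n+1-k : ℕ):ℝ) = (n:ℝ) + 1 - (k:ℝ) := by
      push_cast [Nat.cast_sub hk']; ring
    rw [hc]
    field_simp
    ring
  have R : ((n:ℝ)+1) * W n
      = (∑ k ∈ Finset.range (n+1), cc (k+1) * cc (n-k))
        + ∑ k ∈ Finset.range (n+1), cc k * cc (n+1-k) * ((n+1-k : ℕ):ℝ) / ((k:ℝ)+1) := by
    rw [W, Finset.mul_sum, ← Finset.sum_add_distrib]
    apply Finset.sum_congr rfl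
    intro k hk
    have hk' : k ≤ n := by simpa [Nat.lt_succ_iff] using hk
    have hc : ((n+1-k : ℕ):ℝ) = (n:ℝ) + 1 - (k:ℝ) := by
      have : k ≤ n + 1 := hk'.trans (Nat.le_succ n)
      push_cast [Nat.cast_sub this]; ring
    have hsub : n + 1 - k = (n - k) + 1 := by omega
    rw [hc, cc_succ, hsub, cc_succ]
    have hc2 : ((n-k : ℕ):ℝ) = (n:ℝ) - (k:ℝ) := by push_cast [Nat.cast_sub hk']; ring
    rw [hc2]
    have p1 : (0:ℝ) < (k:ℝ)+1 := by positivity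
    have p2 : (0:ℝ) < (n:ℝ)-(k:ℝ)+1 := by
      have : (k:ℝ) ≤ (n:ℝ) := by exact_mod_cast hk'
      linarith
    field_simp
    ring
  rw [L, R]
  -- first sums: range(n+2) f = f 0 + range(n+1) (f ∘ succ)
  have S1 : (∑ k ∈ Finset.range (n+2), cc k * cc (n+1-k))
      = (∑ k ∈ Finset.range (n+1), cc (k+1) * cc (n-k)) + cc 0 * cc (n+1) := by
    rw [Finset.sum_range_succ' (fun k => cc k * cc (n+1-k)) (n+1)]
    simp [Nat.succ_sub_succ]
  have S2 : (∑ k ∈ Finset.range (n+2), cc k * cc (n+1-k) * ((n+1-k : ℕ):ℝ) / ((k:ℝ)+1))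
      = ∑ k ∈ Finset.range (n+1), cc k * cc (n+1-k) * ((n+1-k : ℕ):ℝ) / ((k:ℝ)+1) := by
    rw [Finset.sum_range_succ]
    simp
  rw [S1, S2, cc_zero]
  ring

lemma W_eq (n : ℕ) : W n = 2 * Real.sqrt π * cc (n+1) := by
  induction n with
  | zero =>
    have : W 0 = cc 0 * cc 0 := by simp [W]
    rw [this, cc_zero, cc_succ, cc_zero]
    have hs := Real.mul_self_sqrt Real.pi_pos.le
    push_cast
    nlinarith [Real.sqrt_nonneg π]
  | succ n ih =>
    have h := key_rec n
    rw [ih] at h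
    have hp : ((n:ℝ)+2) ≠ 0 := by positivity
    have : W (n+1) = (((n:ℝ)+1) * (2 * Real.sqrt π * cc (n+1)) + Real.sqrt π * cc (n+1)) / ((n:ℝ)+2) := by
      field_simp at h ⊢; linarith
    rw [this, cc_succ (n+1)]
    push_cast
    field_simp
    ring

noncomputable def S (n n' : ℕ) : ℝ :=
  ∑ k ∈ Finset.range (min n n' + 1), cc k * cc (n-k) * cc (n'-k)

lemma S_symm (n n' : ℕ) : S n n' = S n' n := by
  unfold S
  rw [min_comm]
  exact Finset.sum_congr rfl (fun k _ => by ring)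

lemma LB (n n' : ℕ) :
    2 * Real.sqrt π * cc (n+1) * cc (n'+1)
      ≤ ∑ j ∈ Finset.range (n+1), cc j * cc (n-j) * cc (n'-j) / ((j:ℝ)+1) := by
  have h : ∀ j ∈ Finset.range (n+1),
      cc j * cc (n-j) / ((j:ℝ)+1) * cc (n'+1) ≤ cc j * cc (n-j) * cc (n'-j) / ((j:ℝ)+1) := by
    intro j _
    have h1 : cc (n'+1) ≤ cc (n'-j) := cc_anti (by omega)
    have h2 : 0 < cc j * cc (n-j) / ((j:ℝ)+1) := by
      have := cc_pos j; have := cc_pos (n-j); positivity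
    calc cc j * cc (n-j) / ((j:ℝ)+1) * cc (n'+1)
        ≤ cc j * cc (n-j) / ((j:ℝ)+1) * cc (n'-j) := by
          exact mul_le_mul_of_nonneg_left h1 h2.le
      _ = cc j * cc (n-j) * cc (n'-j) / ((j:ℝ)+1) := by ring
  calc 2 * Real.sqrt π * cc (n+1) * cc (n'+1) = W n * cc (n'+1) := by rw [W_eq]
    _ = ∑ j ∈ Finset.range (n+1), cc j * cc (n-j) / ((j:ℝ)+1) * cc (n'+1) := by
        rw [W, Finset.sum_mul]
    _ ≤ _ := Finset.sum_le_sum h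

lemma S_step_le (n n' : ℕ) (hn : n ≤ n') : S (n+1) (n'+1) ≤ S n n' := by
  have hmin : min (n+1) (n'+1) + 1 = n + 2 := by omega
  have hmin' : min n n' = n := by omega
  have hS1 : S (n+1) (n'+1)
      = (∑ j ∈ Finset.range (n+1), cc (j+1) * cc (n-j) * cc (n'-j))
        + cc 0 * cc (n+1) * cc (n'+1) := by
    rw [S, hmin,
      Finset.sum_range_succ' (fun k => cc k * cc (n+1-k) * cc (n'+1-k)) (n+1)]
    simp [Nat.succ_sub_succ]
  have hterm : ∀ j ∈ Finset.range (n+1),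
      cc (j+1) * cc (n-j) * cc (n'-j)
        ≤ cc j * cc (n-j) * cc (n'-j)
            - cc (n'+1) * (cc j * cc (n-j) / ((j:ℝ)+1)) / 2 := by
    intro j hj
    rw [cc_succ]
    have p1 : (0:ℝ) < (j:ℝ)+1 := by positivity
    have hB : cc (n'+1) ≤ cc (n'-j) := cc_anti (by omega)
    have e1 : cc j * (((j:ℝ)+1/2)/((j:ℝ)+1)) * cc (n-j) * cc (n'-j)
        = cc j * cc (n-j) * cc (n'-j)
          - cc (n'-j) * (cc j * cc (n-j) / ((j:ℝ)+1)) / 2 := by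
      field_simp
      ring
    rw [e1]
    have p2 : 0 < cc j * cc (n-j) / ((j:ℝ)+1) / 2 := by
      have := cc_pos j; have := cc_pos (n-j); positivity
    nlinarith
  have hsum : (∑ j ∈ Finset.range (n+1), cc (j+1) * cc (n-j) * cc (n'-j))
      ≤ S n n' - cc (n'+1) * W n / 2 := by
    calc (∑ j ∈ Finset.range (n+1), cc (j+1) * cc (n-j) * cc (n'-j))
        ≤ ∑ j ∈ Finset.range (n+1),
            (cc j * cc (n-j) * cc (n'-j) - cc (n'+1) * (cc j * cc (n-j) / ((j:ℝ)+1)) / 2) :=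
          Finset.sum_le_sum hterm
      _ = S n n' - cc (n'+1) * W n / 2 := by
          rw [Finset.sum_sub_distrib, S, hmin', W, Finset.mul_sum, Finset.sum_div]
  rw [hS1, cc_zero]
  have hW := W_eq n
  nlinarith [Real.sqrt_nonneg π, cc_pos (n+1), cc_pos (n'+1)]

lemma poch_pos {x a : ℝ} (hx : 0 < x) (hxa : 0 < x + a) : 0 < poch x a :=
  div_pos (Real.Gamma_pos_of_pos hxa) (Real.Gamma_pos_of_pos hx)

noncomputable def AA (μ k : ℕ) : ℝ := Real.Gamma ((k:ℝ) + (μ:ℝ) + 1/2) / Real.Gamma ((k:ℝ) + 1)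

lemma AA_pos (μ k : ℕ) : 0 < AA μ k := by
  apply div_pos <;> apply Real.Gamma_pos_of_pos <;> positivity

noncomputable def pref (μ : ℕ) (n n' : ℕ) : ℝ :=
  1 / (Real.pi * Real.sqrt (poch ((n:ℝ)+1) (μ:ℝ) * poch ((n':ℝ)+1) (μ:ℝ)))

lemma pref_pos (μ n n' : ℕ) : 0 < pref μ n n' := by
  have h1 : 0 < poch ((n:ℝ)+1) (μ:ℝ) := poch_pos (by positivity) (by positivity)
  have h2 : 0 < poch ((n':ℝ)+1) (μ:ℝ) := poch_pos (by positivity) (by positivity)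
  exact one_div_pos.mpr (mul_pos Real.pi_pos (Real.sqrt_pos.mpr (mul_pos h1 h2)))

lemma v0_nat_eq (μ n n' : ℕ) : v0 (μ:ℤ) n n' =
    ∑ k ∈ Finset.range (min n n' + 1),
      pref μ n n' * AA μ k * (cc (n-k) * cc (n'-k)) := by
  rw [v0, Finset.mul_sum]
  have habs : ((|(μ:ℤ)| : ℤ) : ℝ) = (μ:ℝ) := by
    push_cast [abs_of_nonneg (Int.natCast_nonneg μ)]; rfl
  apply Finset.sum_congr rfl
  intro k hk
  rw [Finset.mem_range, Nat.lt_succ_iff] at hk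
  have hkn : k ≤ n := le_trans hk (min_le_left _ _)
  have hkn' : k ≤ n' := le_trans hk (min_le_right _ _)
  have e1 : poch ((k:ℝ) + 1) (((|(μ:ℤ)| : ℤ) : ℝ) - 1/2) = AA μ k := by
    rw [habs, poch, AA, show (k:ℝ) + 1 + ((μ:ℝ) - 1/2) = (k:ℝ) + (μ:ℝ) + 1/2 by ring]
  have e2 : ∀ (j : ℕ), poch ((j:ℝ) + 1/2) (1/2) = (cc j)⁻¹ := by
    intro j
    rw [poch, cc, show (j:ℝ) + 1/2 + 1/2 = (j:ℝ) + 1 by ring, inv_div]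
  have c1 : ((n - k : ℕ):ℝ) = (n:ℝ) - (k:ℝ) := by push_cast [Nat.cast_sub hkn]; ring
  have c2 : ((n' - k : ℕ):ℝ) = (n':ℝ) - (k:ℝ) := by push_cast [Nat.cast_sub hkn']; ring
  have e3 : poch ((n:ℝ) - (k:ℝ) + 1/2) (1/2) = (cc (n-k))⁻¹ := by rw [← c1, e2]
  have e4 : poch ((n':ℝ) - (k:ℝ) + 1/2) (1/2) = (cc (n'-k))⁻¹ := by rw [← c2, e2]
  rw [e1, e3, e4, habs, pref]
  have := cc_pos (n-k); have := cc_pos (n'-k)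
  field_simp

lemma poch_nat_succ (x : ℝ) (hx : 0 < x) (μ : ℕ) :
    poch x ((μ:ℝ)+1) = poch x (μ:ℝ) * (x + μ) := by
  rw [poch, poch, show x + ((μ:ℝ)+1) = (x + μ) + 1 by ring,
    Real.Gamma_add_one (by positivity)]
  ring

lemma v0_mono_step (μ n n' : ℕ) : v0 ((μ:ℤ)+1) n n' ≤ v0 (μ:ℤ) n n' := by
  have hcast : ((μ:ℤ)+1) = ((μ+1 : ℕ) : ℤ) := by push_cast; ring
  rw [hcast, v0_nat_eq, v0_nat_eq]
  apply Finset.sum_le_sum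
  intro k hk
  rw [Finset.mem_range, Nat.lt_succ_iff] at hk
  have hkn : k ≤ n := le_trans hk (min_le_left _ _)
  have hkn' : k ≤ n' := le_trans hk (min_le_right _ _)
  have hC : 0 < cc (n-k) * cc (n'-k) := mul_pos (cc_pos _) (cc_pos _)
  apply mul_le_mul_of_nonneg_right _ hC.le
  -- pref (μ+1) n n' * AA (μ+1) k ≤ pref μ n n' * AA μ k
  have hP : 0 < poch ((n:ℝ)+1) (μ:ℝ) := poch_pos (by positivity) (by positivity)
  have hP' : 0 < poch ((n':ℝ)+1) (μ:ℝ) := poch_pos (by positivity) (by positivity)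
  have hAA : AA (μ+1) k = AA μ k * ((k:ℝ) + (μ:ℝ) + 1/2) := by
    rw [AA, AA]
    push_cast
    rw [show (k:ℝ) + ((μ:ℝ)+1) + 1/2 = ((k:ℝ) + (μ:ℝ) + 1/2) + 1 by ring,
      Real.Gamma_add_one (by positivity)]
    ring
  have hpref : pref (μ+1) n n'
      = pref μ n n' / Real.sqrt (((n:ℝ) + 1 + μ) * ((n':ℝ) + 1 + μ)) := by
    rw [pref, pref]
    push_cast
    rw [poch_nat_succ _ (by positivity), poch_nat_succ _ (by positivity)]
    rw [show poch ((n:ℝ)+1) (μ:ℝ) * ((n:ℝ) + 1 + μ) * (poch ((n':ℝ)+1) (μ:ℝ) * ((n':ℝ) + 1 + μ))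
        = (poch ((n:ℝ)+1) (μ:ℝ) * poch ((n':ℝ)+1) (μ:ℝ)) * (((n:ℝ) + 1 + μ) * ((n':ℝ) + 1 + μ)) by ring]
    rw [Real.sqrt_mul (by positivity)]
    field_simp
  have hR : ((k:ℝ) + (μ:ℝ) + 1/2) ≤ Real.sqrt (((n:ℝ) + 1 + μ) * ((n':ℝ) + 1 + μ)) := by
    rw [Real.le_sqrt (by positivity) (by positivity)]
    have h1 : (k:ℝ) ≤ (n:ℝ) := by exact_mod_cast hkn
    have h2 : (k:ℝ) ≤ (n':ℝ) := by exact_mod_cast hkn'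
    nlinarith
  have hRpos : 0 < Real.sqrt (((n:ℝ) + 1 + μ) * ((n':ℝ) + 1 + μ)) := by
    apply Real.sqrt_pos.mpr; positivity
  rw [hAA, hpref]
  have hApos := AA_pos μ k
  have hprefpos := pref_pos μ n n'
  rw [div_mul_eq_mul_div, div_le_iff₀ hRpos]
  calc pref μ n n' * (AA μ k * ((k:ℝ) + (μ:ℝ) + 1/2))
      = (pref μ n n' * AA μ k) * ((k:ℝ) + (μ:ℝ) + 1/2) := by ring
    _ ≤ (pref μ n n' * AA μ k) * Real.sqrt (((n:ℝ) + 1 + μ) * ((n':ℝ) + 1 + μ)) := by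
        apply mul_le_mul_of_nonneg_left hR (by positivity)

lemma S_step (n n' : ℕ) : S (n+1) (n'+1) ≤ S n n' := by
  rcases le_or_gt n n' with h | h
  · exact S_step_le n n' h
  · rw [S_symm, S_symm n]; exact S_step_le n' n h.le

lemma v0_nat_anti (n n' : ℕ) {μ₁ μ₂ : ℕ} (h : μ₁ ≤ μ₂) : v0 (μ₂:ℤ) n n' ≤ v0 (μ₁:ℤ) n n' := by
  have ha : Antitone (fun μ : ℕ => v0 (μ:ℤ) n n') := by
    apply antitone_nat_of_succ_le
    intro μ
    have hc : ((μ+1 : ℕ) : ℤ) = (μ:ℤ)+1 := by push_cast; ring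
    show v0 ((μ+1 : ℕ) : ℤ) n n' ≤ v0 (μ:ℤ) n n'
    rw [hc]
    exact v0_mono_step μ n n'
  exact ha h

lemma v0_natAbs (m : ℤ) (n n' : ℕ) : v0 m n n' = v0 (m.natAbs : ℤ) n n' := by
  have : |(m.natAbs : ℤ)| = |m| := by
    rw [Int.abs_natCast, Int.natCast_natAbs]
  simp only [v0, this]

lemma v0_nat_pos (μ n n' : ℕ) : 0 < v0 (μ:ℤ) n n' := by
  rw [v0_nat_eq]
  apply Finset.sum_pos
  · intro k _
    have := pref_pos μ n n'; have := AA_pos μ k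
    have := cc_pos (n-k); have := cc_pos (n'-k)
    positivity
  · exact Finset.nonempty_range_iff.mpr (Nat.succ_ne_zero _)

lemma v0_pos (m : ℤ) (n n' : ℕ) : 0 < v0 m n n' := by
  rw [v0_natAbs]; exact v0_nat_pos _ n n'

lemma v0_zero_eq (n n' : ℕ) : v0 0 n n' = S n n' / Real.pi := by
  have h0 : ((0:ℕ):ℤ) = 0 := rfl
  rw [← h0, v0_nat_eq, S, Finset.sum_div]
  apply Finset.sum_congr rfl
  intro k _
  have hAA : AA 0 k = cc k := by
    rw [AA, cc]
    norm_num
  have hpref : pref 0 n n' = 1 / Real.pi := by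
    have hpoch : ∀ N : ℕ, poch ((N:ℝ)+1) ((0:ℕ):ℝ) = 1 := by
      intro N
      rw [poch]
      norm_num
      exact (Real.Gamma_pos_of_pos (by positivity : (0:ℝ) < (N:ℝ) + 1)).ne'
    rw [pref, hpoch, hpoch]
    norm_num
  rw [hAA, hpref]
  ring

theorem potential_matrix_elements_bounds (m : ℤ) (n n' : ℕ) :
    0 ≤ v0 m n n' + v1 m n n' ∧
    v0 m n n' + v1 m n n' ≤ v0 0 n n' + v1 0 n n' := by
  have hv1pos : 0 < v1 m n n' := by
    rw [v1]
    split <;> exact v0_pos _ _ _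
  constructor
  · have := v0_pos m n n'
    linarith
  · have hv10 : v1 0 n n' = v0 1 n n' := by rw [v1, if_pos le_rfl]; norm_num
    rcases le_or_gt 0 m with hm | hm
    · have hμ : m = (m.toNat : ℤ) := (Int.toNat_of_nonneg hm).symm
      have hμ1 : m + 1 = ((m.toNat + 1 : ℕ) : ℤ) := by push_cast [← hμ]; ring
      have b1 : v0 m n n' ≤ v0 0 n n' := by
        rw [hμ, show (0:ℤ) = ((0:ℕ):ℤ) from rfl]
        exact v0_nat_anti n n' (Nat.zero_le _)
      have b2 : v0 (m+1) n n' ≤ v0 1 n n' := by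
        rw [hμ1, show (1:ℤ) = ((1:ℕ):ℤ) from rfl]
        exact v0_nat_anti n n' (by omega)
      rw [v1, if_pos hm, hv10]
      linarith
    · set μ := m.natAbs with hμdef
      have hμ1 : 1 ≤ μ := by omega
      have hm' : m = -(μ:ℤ) := by omega
      have hmabs : (m+1).natAbs = μ - 1 := by omega
      have b1 : v0 m n n' ≤ v0 1 n n' := by
        rw [v0_natAbs, show (1:ℤ) = ((1:ℕ):ℤ) from rfl]
        exact v0_nat_anti n n' hμ1
      have b2 : v0 (m+1) (n+1) (n'+1) ≤ v0 0 n n' := by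
        have s1 : v0 (m+1) (n+1) (n'+1) ≤ v0 0 (n+1) (n'+1) := by
          rw [v0_natAbs, hmabs, show (0:ℤ) = ((0:ℕ):ℤ) from rfl]
          exact v0_nat_anti (n+1) (n'+1) (Nat.zero_le _)
        have s2 : v0 0 (n+1) (n'+1) ≤ v0 0 n n' := by
          rw [v0_zero_eq, v0_zero_eq]
          gcongr
          exact S_step n n'
        linarith
      rw [v1, if_neg (not_le.mpr hm), hv10]
      linarith
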